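/- Let d ≥ 1 and let α, β ∈ ℤ^d with α ▹ 0 and β ▹ 0. Then ⟨𝒞(α·x), 𝒮(β·x)⟩ = 0 in L²([0,1]^d). -/

import Mathlib

open MeasureTheory Filter Topology

/-- The 1-periodic piecewise linear "cosine-like" function:
`𝒞(x) = 4|x - 1/2| - 1` on `[0,1]`, extended by `𝒞(x) = 𝒞(x - ⌊x⌋)`. -/
noncomputable def Cfun (x : ℝ) : ℝ := 4 * |Int.fract x - 1 / 2| - 1

/-- The 1-periodic piecewise linear "sine-like" function:
`𝒮(x) = |2 - 4|x - 1/4|| - 1` on `[0,1]`, extended by `𝒮(x) = 𝒮(x - ⌊x⌋)`. -/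
noncomputable def Sfun (x : ℝ) : ℝ := abs (2 - 4 * |Int.fract x - 1 / 4|) - 1

/-- `α ▹ 0`: the first nonzero entry of the integer vector `α` is positive. -/
def PosLead {d : ℕ} (α : Fin d → ℤ) : Prop :=
  ∃ i : Fin d, 0 < α i ∧ ∀ j : Fin d, j < i → α j = 0

lemma Cfun_neg (t : ℝ) : Cfun (-t) = Cfun t := by
  unfold Cfun
  by_cases h : Int.fract t = 0
  · rw [Int.fract_neg_eq_zero.mpr h, h]
  · rw [Int.fract_neg h]
    have : |1 - Int.fract t - 1 / 2| = |Int.fract t - 1 / 2| := by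
      rw [show (1 : ℝ) - Int.fract t - 1 / 2 = -(Int.fract t - 1 / 2) by ring, abs_neg]
    rw [this]

lemma Sfun_neg (t : ℝ) : Sfun (-t) = -Sfun t := by
  unfold Sfun
  by_cases h : Int.fract t = 0
  · rw [Int.fract_neg_eq_zero.mpr h, h]
    rw [show |(0:ℝ) - 1 / 4| = 1 / 4 by rw [abs_of_nonpos] <;> norm_num]
    norm_num
  · rw [Int.fract_neg h]
    set s := Int.fract t with hs
    have h1 : 0 ≤ s := Int.fract_nonneg t
    have h2 : s < 1 := Int.fract_lt_one t
    rcases le_total s (1 / 4) with hc | hc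
    · rw [abs_of_nonneg (show (0:ℝ) ≤ 1 - s - 1 / 4 by linarith),
        abs_of_nonpos (show s - 1 / 4 ≤ 0 by linarith),
        abs_of_nonpos (show 2 - 4 * (1 - s - 1 / 4) ≤ 0 by linarith),
        abs_of_nonneg (show (0:ℝ) ≤ 2 - 4 * -(s - 1 / 4) by linarith)]
      ring
    · rcases le_total s (3 / 4) with hc' | hc'
      · rw [abs_of_nonneg (show (0:ℝ) ≤ 1 - s - 1 / 4 by linarith),
          abs_of_nonneg (show (0:ℝ) ≤ s - 1 / 4 by linarith),
          abs_of_nonneg (show (0:ℝ) ≤ 2 - 4 * (1 - s - 1 / 4) by linarith),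
          abs_of_nonneg (show (0:ℝ) ≤ 2 - 4 * (s - 1 / 4) by linarith)]
        ring
      · rw [abs_of_nonpos (show 1 - s - 1 / 4 ≤ 0 by linarith),
          abs_of_nonneg (show (0:ℝ) ≤ s - 1 / 4 by linarith),
          abs_of_nonneg (show (0:ℝ) ≤ 2 - 4 * -(1 - s - 1 / 4) by linarith),
          abs_of_nonpos (show 2 - 4 * (s - 1 / 4) ≤ 0 by linarith)]
        ring

lemma Cfun_int_sub (n : ℤ) (t : ℝ) : Cfun ((n : ℝ) - t) = Cfun t := by
  have : (n : ℝ) - t = (n : ℝ) + (-t) := by ring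
  rw [this]
  unfold Cfun
  rw [Int.fract_intCast_add]
  have := Cfun_neg t
  unfold Cfun at this
  linarith

lemma Sfun_int_sub (n : ℤ) (t : ℝ) : Sfun ((n : ℝ) - t) = -Sfun t := by
  have : (n : ℝ) - t = (n : ℝ) + (-t) := by ring
  rw [this]
  unfold Sfun
  rw [Int.fract_intCast_add]
  have := Sfun_neg t
  unfold Sfun at this
  linarith

/-- For `α, β ∈ ℤ^d` with `α ▹ 0`, `β ▹ 0`, one has `⟨𝒞(α·x), 𝒮(β·x)⟩ = 0` in `L²([0,1]^d)`. -/
theorem inner_C_S_multivariate_eq_zero (d : ℕ) (hd : 1 ≤ d) (α β : Fin d → ℤ)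
    (hα : PosLead α) (hβ : PosLead β) :
    ∫ x in Set.Icc (0 : Fin d → ℝ) 1,
        Cfun (∑ i, (α i : ℝ) * x i) * Sfun (∑ i, (β i : ℝ) * x i) = 0 := by
  set f : (Fin d → ℝ) → ℝ :=
    fun x => Cfun (∑ i, (α i : ℝ) * x i) * Sfun (∑ i, (β i : ℝ) * x i) with hf
  have hmp : MeasurePreserving (fun x : Fin d → ℝ => (1 : Fin d → ℝ) - x) volume volume :=
    Measure.measurePreserving_sub_left volume 1
  have hemb : MeasurableEmbedding (fun x : Fin d → ℝ => (1 : Fin d → ℝ) - x) :=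
    (Homeomorph.subLeft (1 : Fin d → ℝ)).measurableEmbedding
  have hpre : (fun x : Fin d → ℝ => (1 : Fin d → ℝ) - x) ⁻¹' (Set.Icc 0 1) = Set.Icc 0 1 := by
    ext x
    simp only [Set.mem_preimage, Set.mem_Icc, Pi.le_def, Pi.sub_apply, Pi.one_apply,
      Pi.zero_apply]
    constructor <;> rintro ⟨h1, h2⟩ <;>
      exact ⟨fun i => by linarith [h1 i, h2 i], fun i => by linarith [h1 i, h2 i]⟩
  have key : ∫ x in Set.Icc (0 : Fin d → ℝ) 1, f x
      = ∫ x in Set.Icc (0 : Fin d → ℝ) 1, f ((1 : Fin d → ℝ) - x) := by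
    conv_lhs => rw [← hmp.setIntegral_preimage_emb hemb f (Set.Icc 0 1)]
    rw [hpre]
  have hneg : ∀ x : Fin d → ℝ, f ((1 : Fin d → ℝ) - x) = -f x := by
    intro x
    have hsum : ∀ γ : Fin d → ℤ,
        (∑ i, (γ i : ℝ) * ((1 : Fin d → ℝ) - x) i)
          = ((∑ i, γ i : ℤ) : ℝ) - ∑ i, (γ i : ℝ) * x i := by
      intro γ
      push_cast
      rw [← Finset.sum_sub_distrib]
      exact Finset.sum_congr rfl fun i _ => by simp [Pi.sub_apply]; ring
    simp only [hf, hsum α, hsum β, Cfun_int_sub, Sfun_int_sub]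
    ring
  rw [key]
  simp only [hneg]
  rw [integral_neg] at *
  have : ∫ x in Set.Icc (0 : Fin d → ℝ) 1, f x
      = -∫ x in Set.Icc (0 : Fin d → ℝ) 1, f x := by
    conv_lhs => rw [key]
    simp only [hneg]
    exact integral_neg _
  linarith [this]
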